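/- arXiv:cs/0703059 — 8 statements merged into one kernel-verified Lean document; each statement's English description precedes it below -/
import Mathlib

section
/- The rank of the 2×2 matrix multiplication map over ℂ is at most 7; that is, there exist linear functionals α_1,…,α_7 on Matrix(2×2,ℂ), linear functionals β_1,…,β_7 on Matrix(2×2,ℂ), and matrices c_1,…,c_7 ∈ Matrix(2×2,ℂ) such that for all A, B ∈ Matrix(2×2,ℂ), A·B = Σ_{i=1}^{7} α_i(A) β_i(B) c_i. -/
open scoped BigOperators

/-- A bilinear map `f : A × B → C` over `ℂ` has rank at most `r` if it admits a bilinear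
computation of length `r`. -/
def HasRankLE {A B C : Type*} [AddCommGroup A] [Module ℂ A] [AddCommGroup B] [Module ℂ B]
    [AddCommGroup C] [Module ℂ C] (f : A → B → C) (r : ℕ) : Prop :=
  ∃ (α : Fin r → (A →ₗ[ℂ] ℂ)) (β : Fin r → (B →ₗ[ℂ] ℂ)) (c : Fin r → C),
    ∀ a b, f a b = ∑ i, (α i a * β i b) • c i

/-- Entry extraction as a linear map. -/
def entryLM (i j : Fin 2) : Matrix (Fin 2) (Fin 2) ℂ →ₗ[ℂ] ℂ where
  toFun M := M i j
  map_add' _ _ := rfl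
  map_smul' _ _ := rfl

theorem entryLM_apply (i j : Fin 2) (M : Matrix (Fin 2) (Fin 2) ℂ) : entryLM i j M = M i j := rfl

/-- Strassen: the rank of 2×2 matrix multiplication over ℂ is at most 7. -/
theorem rank_matMul_two_le_seven :
    HasRankLE (fun (A B : Matrix (Fin 2) (Fin 2) ℂ) => A * B) 7 := by
  refine ⟨![entryLM 0 0 + entryLM 1 1, entryLM 1 0 + entryLM 1 1, entryLM 0 0,
      entryLM 1 1, entryLM 0 0 + entryLM 0 1, entryLM 1 0 - entryLM 0 0,
      entryLM 0 1 - entryLM 1 1],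
    ![entryLM 0 0 + entryLM 1 1, entryLM 0 0, entryLM 0 1 - entryLM 1 1,
      entryLM 1 0 - entryLM 0 0, entryLM 1 1, entryLM 0 0 + entryLM 0 1,
      entryLM 1 0 + entryLM 1 1],
    ![!![1,0;0,1], !![0,0;1,-1], !![0,1;0,1], !![1,0;1,0], !![-1,1;0,0],
      !![0,0;0,1], !![1,0;0,0]], ?_⟩
  intro A B
  ext i j
  fin_cases i <;> fin_cases j <;>
    simp [entryLM_apply, Matrix.mul_apply, Fin.sum_univ_succ, Matrix.sum_apply] <;> ring
end

section
/- For every natural number k, the rank of the matrix multiplication map for 2^k × 2^k matrices over ℂ satisfies R(M_{2^k,2^k,2^k}) ≤ 7^k. -/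
open scoped BigOperators

section Aux

variable {A B C A' B' C' : Type*} [AddCommGroup A] [Module ℂ A] [AddCommGroup B] [Module ℂ B]
    [AddCommGroup C] [Module ℂ C] [AddCommGroup A'] [Module ℂ A'] [AddCommGroup B'] [Module ℂ B']
    [AddCommGroup C'] [Module ℂ C']

lemma hasRankLE_restrict {s r : ℕ} {g : A → B → C} (hg : HasRankLE g r)
    (P : Fin s → (A' →ₗ[ℂ] A)) (Q : Fin s → (B' →ₗ[ℂ] B)) (L : Fin s → (C →ₗ[ℂ] C'))
    (f : A' → B' → C') (hf : ∀ a b, f a b = ∑ j, L j (g (P j a) (Q j b))) :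
    HasRankLE f (s * r) := by
  obtain ⟨α, β, c, h⟩ := hg
  refine ⟨fun k => (α (finProdFinEquiv.symm k).2).comp (P (finProdFinEquiv.symm k).1),
      fun k => (β (finProdFinEquiv.symm k).2).comp (Q (finProdFinEquiv.symm k).1),
      fun k => L (finProdFinEquiv.symm k).1 (c (finProdFinEquiv.symm k).2), ?_⟩
  intro a b
  rw [hf, ← Equiv.sum_comp (finProdFinEquiv : Fin s × Fin r ≃ Fin (s * r)),
    Fintype.sum_prod_type]
  simp [h, map_sum, map_smul]

end Aux

section Blocks

variable (n : ℕ)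

/-- The four corner-extraction linear maps. -/
def blk₁₁ : Matrix (Fin n ⊕ Fin n) (Fin n ⊕ Fin n) ℂ →ₗ[ℂ] Matrix (Fin n) (Fin n) ℂ where
  toFun := Matrix.toBlocks₁₁
  map_add' _ _ := rfl
  map_smul' _ _ := rfl

def blk₁₂ : Matrix (Fin n ⊕ Fin n) (Fin n ⊕ Fin n) ℂ →ₗ[ℂ] Matrix (Fin n) (Fin n) ℂ where
  toFun := Matrix.toBlocks₁₂
  map_add' _ _ := rfl
  map_smul' _ _ := rfl

def blk₂₁ : Matrix (Fin n ⊕ Fin n) (Fin n ⊕ Fin n) ℂ →ₗ[ℂ] Matrix (Fin n) (Fin n) ℂ where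
  toFun := Matrix.toBlocks₂₁
  map_add' _ _ := rfl
  map_smul' _ _ := rfl

def blk₂₂ : Matrix (Fin n ⊕ Fin n) (Fin n ⊕ Fin n) ℂ →ₗ[ℂ] Matrix (Fin n) (Fin n) ℂ where
  toFun := Matrix.toBlocks₂₂
  map_add' _ _ := rfl
  map_smul' _ _ := rfl

/-- Place scalar multiples of a matrix in the four corners. -/
def emb (x y z w : ℂ) : Matrix (Fin n) (Fin n) ℂ →ₗ[ℂ] Matrix (Fin n ⊕ Fin n) (Fin n ⊕ Fin n) ℂ where
  toFun M := Matrix.fromBlocks (x • M) (y • M) (z • M) (w • M)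
  map_add' M N := by
    simp [smul_add, Matrix.fromBlocks_add]
  map_smul' t M := by
    simp [Matrix.fromBlocks_smul, smul_comm t]

lemma emb_apply (x y z w : ℂ) (M : Matrix (Fin n) (Fin n) ℂ) :
    emb n x y z w M = Matrix.fromBlocks (x • M) (y • M) (z • M) (w • M) := rfl

/-- Strassen's data: left-factor combinations. -/
noncomputable def strP : Fin 7 → (Matrix (Fin n ⊕ Fin n) (Fin n ⊕ Fin n) ℂ →ₗ[ℂ] Matrix (Fin n) (Fin n) ℂ) :=
  ![blk₁₁ n + blk₂₂ n, blk₂₁ n + blk₂₂ n, blk₁₁ n, blk₂₂ n, blk₁₁ n + blk₁₂ n,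
    blk₂₁ n - blk₁₁ n, blk₁₂ n - blk₂₂ n]

/-- Strassen's data: right-factor combinations. -/
noncomputable def strQ : Fin 7 → (Matrix (Fin n ⊕ Fin n) (Fin n ⊕ Fin n) ℂ →ₗ[ℂ] Matrix (Fin n) (Fin n) ℂ) :=
  ![blk₁₁ n + blk₂₂ n, blk₁₁ n, blk₁₂ n - blk₂₂ n, blk₂₁ n - blk₁₁ n, blk₂₂ n,
    blk₁₁ n + blk₁₂ n, blk₂₁ n + blk₂₂ n]

/-- Strassen's data: output placements. -/
noncomputable def strL : Fin 7 → (Matrix (Fin n) (Fin n) ℂ →ₗ[ℂ] Matrix (Fin n ⊕ Fin n) (Fin n ⊕ Fin n) ℂ) :=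
  ![emb n 1 0 0 1, emb n 0 0 1 (-1), emb n 0 1 0 1, emb n 1 0 1 0, emb n (-1) 1 0 0,
    emb n 0 0 0 1, emb n 1 0 0 0]

lemma blk₁₁_apply (M : Matrix (Fin n ⊕ Fin n) (Fin n ⊕ Fin n) ℂ) :
    blk₁₁ n M = M.toBlocks₁₁ := rfl
lemma blk₁₂_apply (M : Matrix (Fin n ⊕ Fin n) (Fin n ⊕ Fin n) ℂ) :
    blk₁₂ n M = M.toBlocks₁₂ := rfl
lemma blk₂₁_apply (M : Matrix (Fin n ⊕ Fin n) (Fin n ⊕ Fin n) ℂ) :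
    blk₂₁ n M = M.toBlocks₂₁ := rfl
lemma blk₂₂_apply (M : Matrix (Fin n ⊕ Fin n) (Fin n ⊕ Fin n) ℂ) :
    blk₂₂ n M = M.toBlocks₂₂ := rfl

lemma strP0 : strP n 0 = blk₁₁ n + blk₂₂ n := rfl
lemma strP1 : strP n 1 = blk₂₁ n + blk₂₂ n := rfl
lemma strP2 : strP n 2 = blk₁₁ n := rfl
lemma strP3 : strP n 3 = blk₂₂ n := rfl
lemma strP4 : strP n 4 = blk₁₁ n + blk₁₂ n := rfl
lemma strP5 : strP n 5 = blk₂₁ n - blk₁₁ n := rfl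
lemma strP6 : strP n 6 = blk₁₂ n - blk₂₂ n := rfl
lemma strQ0 : strQ n 0 = blk₁₁ n + blk₂₂ n := rfl
lemma strQ1 : strQ n 1 = blk₁₁ n := rfl
lemma strQ2 : strQ n 2 = blk₁₂ n - blk₂₂ n := rfl
lemma strQ3 : strQ n 3 = blk₂₁ n - blk₁₁ n := rfl
lemma strQ4 : strQ n 4 = blk₂₂ n := rfl
lemma strQ5 : strQ n 5 = blk₁₁ n + blk₁₂ n := rfl
lemma strQ6 : strQ n 6 = blk₂₁ n + blk₂₂ n := rfl
lemma strL0 : strL n 0 = emb n 1 0 0 1 := rfl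
lemma strL1 : strL n 1 = emb n 0 0 1 (-1) := rfl
lemma strL2 : strL n 2 = emb n 0 1 0 1 := rfl
lemma strL3 : strL n 3 = emb n 1 0 1 0 := rfl
lemma strL4 : strL n 4 = emb n (-1) 1 0 0 := rfl
lemma strL5 : strL n 5 = emb n 0 0 0 1 := rfl
lemma strL6 : strL n 6 = emb n 1 0 0 0 := rfl

lemma strassen_blocks (X Y : Matrix (Fin n ⊕ Fin n) (Fin n ⊕ Fin n) ℂ) :
    X * Y = ∑ j : Fin 7, strL n j (strP n j X * strQ n j Y) := by
  obtain ⟨a, b, c, d, rfl⟩ : ∃ a b c d, X = Matrix.fromBlocks a b c d :=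
    ⟨_, _, _, _, (Matrix.fromBlocks_toBlocks X).symm⟩
  obtain ⟨e, f, g, h, rfl⟩ : ∃ e f g h, Y = Matrix.fromBlocks e f g h :=
    ⟨_, _, _, _, (Matrix.fromBlocks_toBlocks Y).symm⟩
  rw [Matrix.fromBlocks_multiply, Fin.sum_univ_seven]
  simp only [strP0, strP1, strP2, strP3, strP4, strP5, strP6, strQ0, strQ1, strQ2, strQ3, strQ4,
    strQ5, strQ6, strL0, strL1, strL2, strL3, strL4, strL5, strL6, LinearMap.add_apply,
    LinearMap.sub_apply, blk₁₁_apply, blk₁₂_apply, blk₂₁_apply, blk₂₂_apply,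
    Matrix.toBlocks_fromBlocks₁₁, Matrix.toBlocks_fromBlocks₁₂, Matrix.toBlocks_fromBlocks₂₁,
    Matrix.toBlocks_fromBlocks₂₂, emb_apply, one_smul, zero_smul, neg_smul,
    Matrix.fromBlocks_add]
  rw [Matrix.fromBlocks_inj]
  refine ⟨?_, ?_, ?_, ?_⟩ <;> noncomm_ring

end Blocks

/-- The `(0,0)` entry of a `1×1` matrix, as a linear functional. -/
def entryLin : Matrix (Fin 1) (Fin 1) ℂ →ₗ[ℂ] ℂ where
  toFun M := M 0 0
  map_add' _ _ := rfl
  map_smul' _ _ := rfl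

/-- Recursive Strassen: the rank of `2^k × 2^k` matrix multiplication over ℂ is
at most `7^k`. -/
theorem rank_matMul_pow_two_le :
    ∀ k : ℕ, HasRankLE (fun (A B : Matrix (Fin (2 ^ k)) (Fin (2 ^ k)) ℂ) => A * B) (7 ^ k) := by
  intro k
  induction k with
  | zero =>
    refine ⟨fun _ => entryLin, fun _ => entryLin, fun _ => 1, ?_⟩
    intro a b
    ext i j
    fin_cases i; fin_cases j
    simp [Matrix.mul_apply, Matrix.one_apply, entryLin]
    rfl
  | succ k ih =>
    have hn : 2 ^ (k + 1) = 2 ^ k + 2 ^ k := by ring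
    set n := 2 ^ k
    let e : Fin (2 ^ (k + 1)) ≃ (Fin n ⊕ Fin n) := (finCongr hn).trans finSumFinEquiv.symm
    let R := Matrix.reindexLinearEquiv ℂ ℂ e e
    have key : ∀ (A B : Matrix (Fin (2 ^ (k + 1))) (Fin (2 ^ (k + 1))) ℂ),
        A * B = ∑ j : Fin 7,
          (R.symm.toLinearMap.comp (strL n j))
            ((strP n j).comp R.toLinearMap A * (strQ n j).comp R.toLinearMap B) := by
      intro A B
      apply R.injective
      rw [map_sum]
      simp only [LinearMap.comp_apply, LinearEquiv.coe_toLinearMap,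
        LinearEquiv.apply_symm_apply]
      rw [← strassen_blocks n (R A) (R B), Matrix.reindexLinearEquiv_mul]
    have := hasRankLE_restrict ih
      (fun j => (strP n j).comp R.toLinearMap)
      (fun j => (strQ n j).comp R.toLinearMap)
      (fun j => R.symm.toLinearMap.comp (strL n j))
      (fun A B => A * B) key
    rwa [show 7 * 7 ^ k = 7 ^ (k + 1) by ring] at this
end

section
/- (Strassen's equations) Let 3 ≤ a ≤ b ≤ r, and let T ∈ ℂ^a ⊗ ℂ^b ⊗ ℂ^b be a tensor of border rank at most r, i.e., T lies in the closure of the set of tensors of rank at most r. For α in the dual of ℂ^a, let T_α ∈ ℂ^b ⊗ ℂ^b denote the contraction of T by α, regarded as a b×b complex matrix. Suppose α is such that T_α is invertible. Then for all α¹, α² in the dual of ℂ^a, the matrix commutator [T_{α¹}·T_α^{-1}, T_{α²}·T_α^{-1}] = T_{α¹}T_α^{-1}T_{α²}T_α^{-1} − T_{α²}T_α^{-1}T_{α¹}T_α^{-1} has matrix rank at most 2(r − b). -/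
open scoped BigOperators

/-- A tensor `T ∈ ℂ^a ⊗ ℂ^b ⊗ ℂ^c`, given by its coordinates, has rank at most `r`
if it is a sum of `r` decomposable tensors. -/
def TRankLE {a b c : ℕ} (T : Fin a → Fin b → Fin c → ℂ) (r : ℕ) : Prop :=
  ∃ (u : Fin r → Fin a → ℂ) (v : Fin r → Fin b → ℂ) (w : Fin r → Fin c → ℂ),
    ∀ x y z, T x y z = ∑ i, u i x * v i y * w i z

/-- A tensor has border rank at most `r` if it lies in the closure of the set of
tensors of rank at most `r`. -/
def TBorderRankLE {a b c : ℕ} (T : Fin a → Fin b → Fin c → ℂ) (r : ℕ) : Prop :=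
  T ∈ closure {S : Fin a → Fin b → Fin c → ℂ | TRankLE S r}

/-- The contraction `T_α ∈ ℂ^b ⊗ ℂ^b` of `T ∈ ℂ^a ⊗ ℂ^b ⊗ ℂ^b` by a functional `α`
on `ℂ^a` (given by coordinates), regarded as a `b×b` matrix. -/
noncomputable def contr {a b : ℕ} (T : Fin a → Fin b → Fin b → ℂ) (α : Fin a → ℂ) :
    Matrix (Fin b) (Fin b) ℂ :=
  fun j k => ∑ i, α i * T i j k

/-! ### Auxiliary lemmas -/

section Aux

open Matrix Module

/-- Subadditivity of matrix rank. -/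
lemma StrassenAux.rank_add_le {m n : ℕ} (A B : Matrix (Fin m) (Fin n) ℂ) :
    (A + B).rank ≤ A.rank + B.rank := by
  classical
  rw [Matrix.rank, Matrix.rank, Matrix.rank, Matrix.mulVecLin_add]
  have h : LinearMap.range (A.mulVecLin + B.mulVecLin) ≤
      LinearMap.range A.mulVecLin ⊔ LinearMap.range B.mulVecLin := by
    rintro x ⟨y, rfl⟩
    exact Submodule.mem_sup.2 ⟨A.mulVecLin y, ⟨y, rfl⟩, B.mulVecLin y, ⟨y, rfl⟩, rfl⟩
  exact le_trans (Submodule.finrank_mono h) (Submodule.finrank_add_le_finrank_add_finrank _ _)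

lemma StrassenAux.rank_neg {m n : ℕ} (B : Matrix (Fin m) (Fin n) ℂ) : (-B).rank = B.rank := by
  classical
  have h : (-B).mulVecLin = -(B.mulVecLin) := by
    ext v i
    simp [Matrix.mulVecLin, Matrix.neg_mulVec]
  rw [Matrix.rank, h, LinearMap.range_neg, Matrix.rank]

lemma StrassenAux.rank_sub_le {m n : ℕ} (A B : Matrix (Fin m) (Fin n) ℂ) :
    (A - B).rank ≤ A.rank + B.rank := by
  rw [sub_eq_add_neg]
  exact le_trans (StrassenAux.rank_add_le A (-B)) (by rw [StrassenAux.rank_neg])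

lemma StrassenAux.inner_eq_sum {n : ℕ} (x y : EuclideanSpace ℂ (Fin n)) :
    (inner ℂ x y : ℂ) = ∑ i, star (x i) * y i := by
  simp [PiLp.inner_apply, RCLike.inner_apply, mul_comm]

/-- A matrix of rank at most `k ≤ b` is fixed by `P * Pᴴ` for some matrix `P` with
`k` orthonormal columns. -/
lemma StrassenAux.exists_proj {b k : ℕ} (hk : k ≤ b) (M : Matrix (Fin b) (Fin b) ℂ)
    (hM : M.rank ≤ k) :
    ∃ P : Matrix (Fin b) (Fin k) ℂ, Pᴴ * P = 1 ∧ P * Pᴴ * M = M := by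
  classical
  let E := EuclideanSpace ℂ (Fin b)
  let L : (Fin b → ℂ) ≃ₗ[ℂ] E := (WithLp.linearEquiv 2 ℂ (Fin b → ℂ)).symm
  let W₀ : Submodule ℂ E := (LinearMap.range M.mulVecLin).map (L : (Fin b → ℂ) →ₗ[ℂ] E)
  have hW₀ : finrank ℂ W₀ ≤ k :=
    le_trans (le_of_eq (LinearEquiv.finrank_map_eq L (LinearMap.range M.mulVecLin))) hM
  have hcol : ∀ j, (L (M *ᵥ Pi.single j 1)) ∈ W₀ := fun j =>
    Submodule.mem_map_of_mem ⟨Pi.single j 1, rfl⟩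
  set m := finrank ℂ W₀ with hm
  have hmk : m ≤ k := hW₀
  let e : OrthonormalBasis (Fin m) ℂ W₀ := stdOrthonormalBasis ℂ W₀
  let v : Fin b → E := fun i => if h : (i : ℕ) < m then (e ⟨i, h⟩ : E) else 0
  let s : Set (Fin b) := {i | (i : ℕ) < m}
  have hv : Orthonormal ℂ (s.restrict v) := by
    rw [orthonormal_iff_ite]
    rintro ⟨i, hi⟩ ⟨j, hj⟩
    have hi' : (i : ℕ) < m := hi
    have hj' : (j : ℕ) < m := hj
    change inner ℂ (v i) (v j) = _
    simp only [Set.restrict_apply, v, dif_pos hi', dif_pos hj']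
    rw [← Submodule.coe_inner, orthonormal_iff_ite.mp e.orthonormal]
    congr 1
    simp only [eq_iff_iff, Fin.mk.injEq, Subtype.mk.injEq, Fin.ext_iff]
  have hcard : finrank ℂ E = Fintype.card (Fin b) := by
    simp [E, finrank_euclideanSpace]
  obtain ⟨B, hB⟩ := hv.exists_orthonormalBasis_extension_of_card_eq hcard
  let P : Matrix (Fin b) (Fin k) ℂ := Matrix.of fun i j => (B (Fin.castLE hk j) : E) i
  have hPP : Pᴴ * P = 1 := by
    ext j j'
    have horth := orthonormal_iff_ite.mp B.orthonormal (Fin.castLE hk j) (Fin.castLE hk j')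
    rw [StrassenAux.inner_eq_sum] at horth
    rw [Matrix.mul_apply, Matrix.one_apply]
    simp only [Matrix.conjTranspose_apply, Matrix.of_apply, P]
    rw [horth]
    congr 1
    simp only [eq_iff_iff, (Fin.castLE_injective hk).eq_iff]
  have hBe : ∀ i : Fin m, (e i : E) = B (Fin.castLE hk (Fin.castLE hmk i)) := by
    intro i
    have hs : (Fin.castLE (hmk.trans hk) i) ∈ s := by
      simpa [s] using i.isLt
    have h1 := hB _ hs
    have h2 : Fin.castLE hk (Fin.castLE hmk i) = Fin.castLE (hmk.trans hk) i := rfl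
    rw [h2, h1]
    simp only [v, Fin.coe_castLE, dif_pos i.isLt]
  have hcolP : ∀ i : Fin m, P *ᵥ Pi.single (Fin.castLE hmk i) 1 = (e i : E) := by
    intro i
    funext x
    rw [Matrix.mulVec_single]
    simp only [Matrix.of_apply, mul_one, P]
    rw [hBe i]
    simp
  have hrange : ∀ x : W₀, ∃ y : Fin k → ℂ, P *ᵥ y = (x : E) := by
    intro x
    refine ⟨∑ i, e.repr x i • (Pi.single (Fin.castLE hmk i) 1 : Fin k → ℂ), ?_⟩
    have hsr := e.sum_repr x
    have hsum : (x : E) = ∑ i, e.repr x i • ((e i : W₀) : E) := by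
      conv_lhs => rw [← hsr]
      push_cast
      rfl
    calc P *ᵥ (∑ i, e.repr x i • (Pi.single (Fin.castLE hmk i) 1 : Fin k → ℂ))
        = ∑ i, e.repr x i • (P *ᵥ (Pi.single (Fin.castLE hmk i) 1 : Fin k → ℂ)) := by
          rw [show ∀ y, P *ᵥ y = P.mulVecLin y from fun _ => rfl]
          rw [_root_.map_sum]
          simp only [_root_.map_smul]
          rfl
      _ = ∑ i, e.repr x i • ((e i : W₀) : E) := by
          simp only [hcolP]
          exact (map_sum (WithLp.linearEquiv 2 ℂ (Fin b → ℂ))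
            (fun i => e.repr x i • ((e i : W₀) : E)) Finset.univ).symm
      _ = (x : E) := congrArg WithLp.ofLp hsum.symm
  have hPM : P * Pᴴ * M = M := by
    ext i j
    obtain ⟨y, hy⟩ := hrange ⟨L (M *ᵥ Pi.single j 1), hcol j⟩
    have hy' : P *ᵥ y = M *ᵥ Pi.single j 1 := hy
    have hMw : (M *ᵥ Pi.single j 1) = fun x => M x j := by
      funext x; simp [Matrix.mulVec_single]
    have lhs : (P * Pᴴ * M) i j = ((P * Pᴴ) *ᵥ (M *ᵥ Pi.single j 1)) i := by
      rw [hMw, Matrix.mul_apply]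
      rfl
    rw [lhs, ← hy', Matrix.mulVec_mulVec, Matrix.mul_assoc, hPP, Matrix.mul_one, hy', hMw]
  exact ⟨P, hPP, hPM⟩

/-- The set of `b×b` complex matrices of rank at most `k` is closed. -/
lemma StrassenAux.isClosed_rank_le (b k : ℕ) :
    IsClosed {M : Matrix (Fin b) (Fin b) ℂ | M.rank ≤ k} := by
  classical
  rcases le_or_gt b k with h | h
  · have : {M : Matrix (Fin b) (Fin b) ℂ | M.rank ≤ k} = Set.univ := by
      ext M
      simp only [Set.mem_setOf_eq, Set.mem_univ, iff_true]
      exact le_trans (le_trans (M.rank_le_card_width) (by simp)) h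
    rw [this]; exact isClosed_univ
  · have hk : k ≤ b := h.le
    set K : Set (Matrix (Fin b) (Fin k) ℂ) := {P | Pᴴ * P = 1} with hKdef
    have hKclosed : IsClosed K := by
      have hc : Continuous fun P : Matrix (Fin b) (Fin k) ℂ => Pᴴ * P :=
        (Continuous.matrix_conjTranspose continuous_id).matrix_mul continuous_id
      exact isClosed_singleton.preimage hc
    have hKcomp : IsCompact K := by
      have hQ : IsCompact
          {P : Matrix (Fin b) (Fin k) ℂ | ∀ i j, P i j ∈ Metric.closedBall (0:ℂ) 1} := by
        have heq : {P : Matrix (Fin b) (Fin k) ℂ | ∀ i j, P i j ∈ Metric.closedBall (0:ℂ) 1} =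
            Set.pi Set.univ (fun _ : Fin b =>
              Set.pi Set.univ fun _ : Fin k => Metric.closedBall (0:ℂ) 1) := by
          ext P
          exact ⟨fun hP i _ j _ => hP i j, fun hP i j => hP i (Set.mem_univ i) j (Set.mem_univ j)⟩
        rw [heq]
        exact isCompact_univ_pi fun _ => isCompact_univ_pi fun _ => isCompact_closedBall _ _
      refine IsCompact.of_isClosed_subset hQ hKclosed ?_
      intro P hP i j
      simp only [Metric.mem_closedBall, dist_zero_right]
      have h1 : ∑ i, star (P i j) * P i j = 1 := by
        have := congrArg (fun Q => Q j j) hP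
        simpa [Matrix.mul_apply, Matrix.conjTranspose_apply, Matrix.one_apply] using this
      have h2 : ∑ i, Complex.normSq (P i j) = 1 := by
        have := congrArg Complex.re h1
        simpa [Complex.add_re, Complex.normSq, Complex.mul_re, Complex.star_def,
          Complex.mul_conj] using (by
            calc ∑ i, Complex.normSq (P i j) = (∑ i, (Complex.normSq (P i j) : ℂ)).re := by
                  push_cast; simp
              _ = (1:ℂ).re := by
                  rw [show (∑ i, (Complex.normSq (P i j) : ℂ)) = 1 from by
                    rw [← h1]; congr 1; funext i
                    rw [Complex.star_def, ← Complex.normSq_eq_conj_mul_self]]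
              _ = 1 := by simp)
      have h3 : Complex.normSq (P i j) ≤ 1 := by
        rw [← h2]
        exact Finset.single_le_sum (f := fun i' => Complex.normSq (P i' j))
          (fun i' _ => Complex.normSq_nonneg _) (Finset.mem_univ i)
      have h4 : ‖P i j‖ ^ 2 ≤ 1 := by
        rwa [← Complex.sq_norm] at h3
      nlinarith [norm_nonneg (P i j)]
    have hrw : {M : Matrix (Fin b) (Fin b) ℂ | M.rank ≤ k} =
        Prod.snd '' {q : K × Matrix (Fin b) (Fin b) ℂ |
          (q.1 : Matrix (Fin b) (Fin k) ℂ) * (q.1 : Matrix (Fin b) (Fin k) ℂ)ᴴ * q.2 = q.2} := by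
      ext M
      constructor
      · intro hM
        obtain ⟨P, hPP, hPM⟩ := StrassenAux.exists_proj hk M hM
        exact ⟨(⟨P, hPP⟩, M), hPM, rfl⟩
      · rintro ⟨⟨⟨P, hPP⟩, N⟩, hq, rfl⟩
        simp only [Set.mem_setOf_eq] at hq ⊢
        calc N.rank = (P * (Pᴴ * N)).rank := by rw [← Matrix.mul_assoc, hq]
          _ ≤ P.rank := Matrix.rank_mul_le_left P (Pᴴ * N)
          _ ≤ Fintype.card (Fin k) := P.rank_le_card_width
          _ = k := by simp
    rw [hrw]
    have : CompactSpace K := isCompact_iff_compactSpace.mp hKcomp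
    apply isClosedMap_snd_of_compactSpace
    have hf : Continuous fun q : K × Matrix (Fin b) (Fin b) ℂ =>
        (q.1 : Matrix (Fin b) (Fin k) ℂ) * (q.1 : Matrix (Fin b) (Fin k) ℂ)ᴴ * q.2 :=
      ((continuous_subtype_val.comp continuous_fst).matrix_mul
        ((continuous_subtype_val.comp continuous_fst).matrix_conjTranspose)).matrix_mul
        continuous_snd
    exact isClosed_eq hf continuous_snd

/-- Strassen's commutator rank bound for tensors of rank at most `r` admitting a
decomposition all of whose first factors pair nontrivially with `α`. -/
lemma StrassenAux.good_bound {a b r : ℕ} (hbr : b ≤ r) (S : Fin a → Fin b → Fin b → ℂ)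
    (u : Fin r → Fin a → ℂ) (v w : Fin r → Fin b → ℂ)
    (hS : ∀ x y z, S x y z = ∑ i, u i x * v i y * w i z)
    (α α₁ α₂ : Fin a → ℂ)
    (hd : ∀ i, (∑ x, α x * u i x) ≠ 0)
    (hU : IsUnit (contr S α)) :
    (contr S α₁ * (contr S α)⁻¹ * (contr S α₂ * (contr S α)⁻¹) -
      contr S α₂ * (contr S α)⁻¹ * (contr S α₁ * (contr S α)⁻¹)).rank ≤ 2 * (r - b) := by
  classical
  set Am : Matrix (Fin b) (Fin r) ℂ := Matrix.of fun j i => v i j with hAm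
  set Wt : Matrix (Fin r) (Fin b) ℂ := Matrix.of fun i k => w i k with hWt
  let d : (Fin a → ℂ) → Fin r → ℂ := fun β i => ∑ x, β x * u i x
  have hfact : ∀ β, contr S β = Am * Matrix.diagonal (d β) * Wt := by
    intro β
    ext j k
    have h1 : (Am * Matrix.diagonal (d β) * Wt) j k = ∑ i, v i j * d β i * w i k := by
      simp [Matrix.mul_apply, Matrix.diagonal_apply, Finset.sum_ite_eq, Finset.sum_ite_eq',
        mul_ite, ite_mul, mul_zero, zero_mul, hAm, hWt]
    rw [h1]
    show (∑ x, β x * S x j k) = _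
    simp only [hS, Finset.mul_sum]
    rw [Finset.sum_comm]
    refine Finset.sum_congr rfl fun i _ => ?_
    rw [show d β i = ∑ x, β x * u i x from rfl, Finset.mul_sum, Finset.sum_mul]
    refine Finset.sum_congr rfl fun x _ => ?_
    ring
  have hdet : IsUnit (contr S α).det := (Matrix.isUnit_iff_isUnit_det _).mp hU
  set X : Matrix (Fin b) (Fin b) ℂ := (contr S α)⁻¹ with hXdef
  have hXr : contr S α * X = 1 := Matrix.mul_nonsing_inv _ hdet
  set N : Matrix (Fin r) (Fin b) ℂ := Wt * X with hN
  set D : Matrix (Fin r) (Fin r) ℂ := Matrix.diagonal (d α) with hD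
  set D₁ : Matrix (Fin r) (Fin r) ℂ := Matrix.diagonal (d α₁) with hD1
  set D₂ : Matrix (Fin r) (Fin r) ℂ := Matrix.diagonal (d α₂) with hD2
  set Dinv : Matrix (Fin r) (Fin r) ℂ := Matrix.diagonal (fun i => (d α i)⁻¹) with hDinv
  have hI : Am * D * N = 1 := by
    rw [hN, ← Matrix.mul_assoc, hD, ← hfact α, hXr]
  have hM : ∀ β, contr S β * X = Am * Matrix.diagonal (d β) * N := by
    intro β
    rw [hfact β, hN, Matrix.mul_assoc (Am * Matrix.diagonal (d β)) Wt X]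
  set S₁ : Matrix (Fin r) (Fin r) ℂ := D₁ * Dinv with hS1
  set S₂ : Matrix (Fin r) (Fin r) ℂ := D₂ * Dinv with hS2
  have hDiD : Dinv * D = 1 := by
    rw [hDinv, hD, Matrix.diagonal_mul_diagonal]
    rw [show (fun i => (d α i)⁻¹ * d α i) = fun _ => (1:ℂ) from
      funext fun i => inv_mul_cancel₀ (hd i)]
    exact Matrix.diagonal_one
  have hS1D : S₁ * D = D₁ := by rw [hS1, Matrix.mul_assoc, hDiD, Matrix.mul_one]
  have hS2D : S₂ * D = D₂ := by rw [hS2, Matrix.mul_assoc, hDiD, Matrix.mul_one]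
  have hswap : S₂ * D₁ = S₁ * D₂ := by
    rw [hS1, hS2, hD1, hD2, hDinv, Matrix.diagonal_mul_diagonal, Matrix.diagonal_mul_diagonal,
      Matrix.diagonal_mul_diagonal, Matrix.diagonal_mul_diagonal]
    have : (fun i => d α₂ i * (d α i)⁻¹ * d α₁ i) = fun i => d α₁ i * (d α i)⁻¹ * d α₂ i :=
      funext fun i => by ring
    rw [this]
  have e1 : S₂ * (1 - D * (N * Am)) * D₁ = S₂ * D₁ - D₂ * (N * Am) * D₁ := by
    rw [Matrix.mul_sub, Matrix.mul_one, Matrix.sub_mul, ← Matrix.mul_assoc S₂ D (N * Am), hS2D]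
  have e2 : S₁ * (1 - D * (N * Am)) * D₂ = S₁ * D₂ - D₁ * (N * Am) * D₂ := by
    rw [Matrix.mul_sub, Matrix.mul_one, Matrix.sub_mul, ← Matrix.mul_assoc S₁ D (N * Am), hS1D]
  have key : D₁ * (N * Am) * D₂ - D₂ * (N * Am) * D₁ =
      S₂ * (1 - D * (N * Am)) * D₁ - S₁ * (1 - D * (N * Am)) * D₂ := by
    rw [e1, e2, hswap]
    abel
  have hZ : contr S α₁ * X * (contr S α₂ * X) - contr S α₂ * X * (contr S α₁ * X) =
      Am * ((S₂ * (1 - D * (N * Am)) * D₁ - S₁ * (1 - D * (N * Am)) * D₂) * N) := by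
    rw [hM α₁, hM α₂, ← key, ← hD1, ← hD2]
    rw [Matrix.sub_mul, Matrix.mul_sub]
    congr 1 <;> simp only [Matrix.mul_assoc]
  rw [hXdef] at hZ
  rw [hZ]
  have hCDC : (N * Am) * D * (N * Am) = N * Am := by
    calc (N * Am) * D * (N * Am) = N * (Am * D * N) * Am := by simp only [Matrix.mul_assoc]
      _ = N * Am := by rw [hI, Matrix.mul_one]
  have hGG : (D * (N * Am)) * (D * (N * Am)) = D * (N * Am) := by
    calc (D * (N * Am)) * (D * (N * Am)) = D * ((N * Am) * D * (N * Am)) := by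
          simp only [Matrix.mul_assoc]
      _ = D * (N * Am) := by rw [hCDC]
  have hGF : (D * (N * Am)) * (1 - D * (N * Am)) = 0 := by
    rw [Matrix.mul_sub, Matrix.mul_one, hGG, sub_self]
  have hsum := Matrix.rank_add_rank_le_card_of_mul_eq_zero hGF
  rw [Fintype.card_fin] at hsum
  have h1b : Am * ((D * (N * Am)) * (D * N)) = 1 := by
    calc Am * ((D * (N * Am)) * (D * N)) = (Am * D * N) * (Am * D * N) := by
          simp only [Matrix.mul_assoc]
      _ = 1 := by rw [hI, Matrix.mul_one]
  have hbG : b ≤ (D * (N * Am)).rank := by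
    have h1 : (1 : Matrix (Fin b) (Fin b) ℂ).rank = b := by
      rw [Matrix.rank_one, Fintype.card_fin]
    calc b = (1 : Matrix (Fin b) (Fin b) ℂ).rank := h1.symm
      _ = (Am * ((D * (N * Am)) * (D * N))).rank := by rw [h1b]
      _ ≤ ((D * (N * Am)) * (D * N)).rank := Matrix.rank_mul_le_right _ _
      _ ≤ (D * (N * Am)).rank := Matrix.rank_mul_le_left _ _
  have hF : (1 - D * (N * Am)).rank ≤ r - b := by omega
  have hMidN : (Am * ((S₂ * (1 - D * (N * Am)) * D₁ - S₁ * (1 - D * (N * Am)) * D₂) * N)).rank ≤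
      (S₂ * (1 - D * (N * Am)) * D₁ - S₁ * (1 - D * (N * Am)) * D₂).rank :=
    le_trans (Matrix.rank_mul_le_right _ _) (Matrix.rank_mul_le_left _ _)
  have hMid : (S₂ * (1 - D * (N * Am)) * D₁ - S₁ * (1 - D * (N * Am)) * D₂).rank ≤
      (1 - D * (N * Am)).rank + (1 - D * (N * Am)).rank := by
    refine le_trans (StrassenAux.rank_sub_le _ _) (add_le_add ?_ ?_)
    · exact le_trans (Matrix.rank_mul_le_left _ _) (Matrix.rank_mul_le_right _ _)
    · exact le_trans (Matrix.rank_mul_le_left _ _) (Matrix.rank_mul_le_right _ _)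
  omega

/-- Any tensor of rank at most `r` is a limit of tensors admitting a rank-`r`
decomposition all of whose first factors pair nontrivially with `α`. -/
lemma StrassenAux.dense_good {a b c r : ℕ} (α : Fin a → ℂ) (x₀ : Fin a) (hx₀ : α x₀ ≠ 0)
    (S : Fin a → Fin b → Fin c → ℂ) (hS : TRankLE S r) :
    S ∈ closure {S' : Fin a → Fin b → Fin c → ℂ |
      ∃ (u : Fin r → Fin a → ℂ) (v : Fin r → Fin b → ℂ) (w : Fin r → Fin c → ℂ),
        (∀ x y z, S' x y z = ∑ i, u i x * v i y * w i z) ∧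
        ∀ i, (∑ x, α x * u i x) ≠ 0} := by
  classical
  obtain ⟨u, v, w, hdec⟩ := hS
  set g : ℂ → (Fin a → Fin b → Fin c → ℂ) := fun t x y z =>
    ∑ i, (u i x + (if x = x₀ then t else 0)) * v i y * w i z with hg
  have hg0 : g 0 = S := by
    funext x y z
    simp [hg, hdec]
  have hgcont : Continuous g := by
    refine continuous_pi fun x => continuous_pi fun y => continuous_pi fun z => ?_
    refine continuous_finset_sum _ fun i _ => ?_
    refine (Continuous.mul (Continuous.mul ?_ continuous_const) continuous_const)
    refine continuous_const.add ?_
    by_cases hxx : x = x₀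
    · simp only [hxx, eq_self_iff_true, if_true]; exact continuous_id
    · simpa [hxx] using (continuous_const : Continuous fun _ : ℂ => (0:ℂ))
  have hsum : ∀ (t : ℂ) i, (∑ x, α x * (u i x + (if x = x₀ then t else 0)))
      = (∑ x, α x * u i x) + t * α x₀ := by
    intro t i
    rw [show (fun x => α x * (u i x + (if x = x₀ then t else 0))) =
      fun x => α x * u i x + (if x = x₀ then α x * t else 0) from funext fun x => by
        split <;> ring]
    rw [Finset.sum_add_distrib, Finset.sum_ite_eq' Finset.univ x₀ (fun x => α x * t)]
    simp [mul_comm]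
  rw [Metric.mem_closure_iff]
  intro ε hε
  obtain ⟨δ, hδpos, hδ⟩ := Metric.continuousAt_iff.mp (hgcont.continuousAt (x := 0)) ε hε
  set Bf : Finset ℂ := Finset.univ.image (fun i : Fin r => -(∑ x, α x * u i x) / α x₀) with hBf
  set cnd : Fin (r + 1) → ℂ := fun n => (((δ/2) / ((n : ℕ) + 1) : ℝ) : ℂ) with hcnd
  have hinj : Function.Injective cnd := by
    intro n n' h
    have h2 : ((δ/2) / ((n : ℕ) + 1) : ℝ) = ((δ/2) / ((n' : ℕ) + 1) : ℝ) :=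
      Complex.ofReal_injective h
    have hδ2 : (0:ℝ) < δ/2 := by positivity
    have hb1 : (0:ℝ) < ((n : ℕ) : ℝ) + 1 := by positivity
    have hb2 : (0:ℝ) < ((n' : ℕ) : ℝ) + 1 := by positivity
    have h3 := (div_eq_div_iff hb1.ne' hb2.ne').mp h2
    have h4 : (((n' : ℕ) : ℝ)) = (((n : ℕ) : ℝ)) := by nlinarith
    exact Fin.ext (by exact_mod_cast h4.symm)
  have hex : ∃ n : Fin (r + 1), cnd n ∉ Bf := by
    by_contra h
    push_neg at h
    have hsub : Finset.univ.image cnd ⊆ Bf := by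
      intro t ht
      obtain ⟨n, _, rfl⟩ := Finset.mem_image.mp ht
      exact h n
    have h1 : (Finset.univ.image cnd).card = r + 1 := by
      rw [Finset.card_image_of_injective _ hinj, Finset.card_univ, Fintype.card_fin]
    have h2 : Bf.card ≤ r := le_trans (Finset.card_image_le) (by simp)
    have := Finset.card_le_card hsub
    omega
  obtain ⟨n, hn⟩ := hex
  refine ⟨g (cnd n), ?_, ?_⟩
  · refine ⟨fun i x => u i x + (if x = x₀ then cnd n else 0), v, w, fun x y z => rfl, ?_⟩
    intro i
    rw [hsum]
    intro hzero
    apply hn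
    rw [hBf]
    refine Finset.mem_image.mpr ⟨i, Finset.mem_univ i, ?_⟩
    field_simp at hzero ⊢
    linear_combination -hzero
  · have hdist : dist (0 : ℂ) (cnd n) < δ := by
      rw [dist_comm, dist_zero_right, hcnd]
      have h1 : |((δ/2) / ((n : ℕ) + 1) : ℝ)| = (δ/2) / ((n : ℕ) + 1) := by
        rw [abs_of_nonneg]; positivity
      rw [Complex.norm_real, Real.norm_eq_abs, h1]
      have h2 : ((δ/2) / ((n : ℕ) + 1) : ℝ) ≤ δ/2 := by
        apply div_le_self (by positivity)
        simp
      linarith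
    have h3 := hδ (by rwa [dist_comm] at hdist)
    rw [hg0] at h3
    rwa [dist_comm] at h3

lemma StrassenAux.contr_continuous {a b : ℕ} (β : Fin a → ℂ) :
    Continuous fun S : Fin a → Fin b → Fin b → ℂ => contr S β := by
  refine continuous_matrix fun j k => ?_
  refine continuous_finset_sum _ fun i _ => ?_
  exact continuous_const.mul
    ((continuous_apply k).comp ((continuous_apply j).comp (continuous_apply i)))

lemma StrassenAux.isOpen_unit_contr {a b : ℕ} (α : Fin a → ℂ) :
    IsOpen {S : Fin a → Fin b → Fin b → ℂ | IsUnit (contr S α)} := by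
  have h1 : {S : Fin a → Fin b → Fin b → ℂ | IsUnit (contr S α)} =
      (fun S : Fin a → Fin b → Fin b → ℂ => (contr S α).det) ⁻¹' ({0}ᶜ) := by
    ext S
    simp [Matrix.isUnit_iff_isUnit_det, isUnit_iff_ne_zero]
  rw [h1]
  exact isOpen_compl_singleton.preimage (StrassenAux.contr_continuous α).matrix_det

lemma StrassenAux.contr_inv_continuousOn {a b : ℕ} (α : Fin a → ℂ) :
    ContinuousOn (fun S : Fin a → Fin b → Fin b → ℂ => (contr S α)⁻¹)
      {S | IsUnit (contr S α)} := by
  have h1 : (fun S : Fin a → Fin b → Fin b → ℂ => (contr S α)⁻¹) =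
      fun S => ((contr S α).det)⁻¹ • (contr S α).adjugate := by
    funext S
    rw [Matrix.inv_def, Ring.inverse_eq_inv']
  rw [h1]
  refine ContinuousOn.fun_smul ?_ ((StrassenAux.contr_continuous (b := b) α).matrix_adjugate.continuousOn)
  refine ContinuousOn.inv₀ ((StrassenAux.contr_continuous (b := b) α).matrix_det.continuousOn) ?_
  intro S hS
  exact isUnit_iff_ne_zero.mp ((Matrix.isUnit_iff_isUnit_det _).mp hS)

end Aux

/-- Strassen's equations: if `3 ≤ a ≤ b ≤ r`, `T ∈ ℂ^a ⊗ ℂ^b ⊗ ℂ^b` has border rank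
at most `r`, and `α ∈ (ℂ^a)*` is such that `T_α` is invertible, then for all
`α¹, α² ∈ (ℂ^a)*` the commutator `[T_{α¹}T_α⁻¹, T_{α²}T_α⁻¹]` has rank at most `2(r−b)`. -/
theorem strassen_equations {a b r : ℕ} (ha : 3 ≤ a) (hab : a ≤ b) (hbr : b ≤ r)
    (T : Fin a → Fin b → Fin b → ℂ) (hT : TBorderRankLE T r)
    (α : Fin a → ℂ) (hα : IsUnit (contr T α)) (α₁ α₂ : Fin a → ℂ) :
    Matrix.rank
      (contr T α₁ * (contr T α)⁻¹ * (contr T α₂ * (contr T α)⁻¹) -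
        contr T α₂ * (contr T α)⁻¹ * (contr T α₁ * (contr T α)⁻¹)) ≤ 2 * (r - b) := by
  classical
  have hb : 0 < b := lt_of_lt_of_le (by norm_num) (ha.trans hab)
  have hx : ∃ x₀, α x₀ ≠ 0 := by
    by_contra hcon
    push_neg at hcon
    have h0 : contr T α = 0 := by
      ext j k
      simp [contr, hcon]
    have hdet := (Matrix.isUnit_iff_isUnit_det _).mp hα
    haveI : Nonempty (Fin b) := ⟨⟨0, hb⟩⟩
    rw [h0, Matrix.det_zero] at hdet
    simpa using hdet
  obtain ⟨x₀, hx₀⟩ := hx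
  set U := {S : Fin a → Fin b → Fin b → ℂ | IsUnit (contr S α)} with hU
  set f : (Fin a → Fin b → Fin b → ℂ) → Matrix (Fin b) (Fin b) ℂ := fun S =>
    contr S α₁ * (contr S α)⁻¹ * (contr S α₂ * (contr S α)⁻¹) -
      contr S α₂ * (contr S α)⁻¹ * (contr S α₁ * (contr S α)⁻¹) with hf
  have hfc : ContinuousOn f U := by
    have hinv := StrassenAux.contr_inv_continuousOn (a := a) (b := b) α
    have c1 : ContinuousOn (fun S : Fin a → Fin b → Fin b → ℂ =>
        contr S α₁ * (contr S α)⁻¹) U :=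
      (StrassenAux.contr_continuous α₁).continuousOn.mul hinv
    have c2 : ContinuousOn (fun S : Fin a → Fin b → Fin b → ℂ =>
        contr S α₂ * (contr S α)⁻¹) U :=
      (StrassenAux.contr_continuous α₂).continuousOn.mul hinv
    exact (c1.mul c2).sub (c2.mul c1)
  set Cset := {S : Fin a → Fin b → Fin b → ℂ | S ∈ U → (f S).rank ≤ 2 * (r - b)} with hCset
  have hCc : IsClosed Cset := by
    have heq : Cset = (U ∩ f ⁻¹' {M : Matrix (Fin b) (Fin b) ℂ | M.rank ≤ 2 * (r - b)}ᶜ)ᶜ := by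
      ext S
      by_cases hSU : S ∈ U <;> simp [Cset, hSU]
    rw [heq]
    exact (hfc.isOpen_inter_preimage (StrassenAux.isOpen_unit_contr α)
      (StrassenAux.isClosed_rank_le b (2 * (r - b))).isOpen_compl).isClosed_compl
  have hGoodC : {S' : Fin a → Fin b → Fin b → ℂ |
      ∃ (u : Fin r → Fin a → ℂ) (v : Fin r → Fin b → ℂ) (w : Fin r → Fin b → ℂ),
        (∀ x y z, S' x y z = ∑ i, u i x * v i y * w i z) ∧
        ∀ i, (∑ x, α x * u i x) ≠ 0} ⊆ Cset := by
    rintro S ⟨u, v, w, hdec, hd⟩ hSU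
    exact StrassenAux.good_bound hbr S u v w hdec α α₁ α₂ hd hSU
  have hTC : T ∈ Cset := by
    have h1 : {S : Fin a → Fin b → Fin b → ℂ | TRankLE S r} ⊆
        closure {S' : Fin a → Fin b → Fin b → ℂ |
          ∃ (u : Fin r → Fin a → ℂ) (v : Fin r → Fin b → ℂ) (w : Fin r → Fin b → ℂ),
            (∀ x y z, S' x y z = ∑ i, u i x * v i y * w i z) ∧
            ∀ i, (∑ x, α x * u i x) ≠ 0} :=
      fun S hS => StrassenAux.dense_good α x₀ hx₀ S hS
    have h2 := closure_minimal h1 isClosed_closure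
    have h3 := closure_minimal hGoodC hCc
    exact h3 (h2 hT)
  exact hTC hα
end

section
/- The closure of the set of tensors of rank at most 4 in ℂ³ ⊗ ℂ³ ⊗ ℂ³ is a proper subset of ℂ³ ⊗ ℂ³ ⊗ ℂ³; that is, there exists a tensor T ∈ ℂ³ ⊗ ℂ³ ⊗ ℂ³ whose border rank is at least 5. (Equivalently, σ_4(Seg(ℙ²×ℙ²×ℙ²)) ≠ ℙ(ℂ³⊗ℂ³⊗ℂ³).) -/
open scoped BigOperators

open Matrix

noncomputable section

/-- Levi-Civita symbol on `Fin 3`. -/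
def lc : Fin 3 → Fin 3 → Fin 3 → ℂ :=
  ![![![0,0,0],![0,0,1],![0,-1,0]],
    ![![0,0,-1],![0,0,0],![1,0,0]],
    ![![0,1,0],![-1,0,0],![0,0,0]]]

/-- The Koszul flattening of a 3×3×3 tensor, a 9×9 matrix. -/
def KM (T : Fin 3 → Fin 3 → Fin 3 → ℂ) : Matrix (Fin 3 × Fin 3) (Fin 3 × Fin 3) ℂ :=
  fun p q => ∑ j, lc p.1 q.1 j * T j q.2 p.2

def Km (u : Fin 3 → ℂ) : Matrix (Fin 3) (Fin 3) ℂ := fun k x => ∑ j, lc k x j * u j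

def Pm (w : Fin 3 → ℂ) : Matrix (Fin 3 × Fin 3) (Fin 3) ℂ :=
  fun p k => if p.1 = k then w p.2 else 0

def Qm (v : Fin 3 → ℂ) : Matrix (Fin 3) (Fin 3 × Fin 3) ℂ :=
  fun x q => if q.1 = x then v q.2 else 0

lemma KM_decomp (u v w : Fin 3 → ℂ) (p q : Fin 3 × Fin 3) :
    (∑ j, lc p.1 q.1 j * (u j * v q.2 * w p.2)) = (Pm w * (Km u * Qm v)) p q := by
  have h : (Pm w * (Km u * Qm v)) p q
      = w p.2 * ((∑ j, lc p.1 q.1 j * u j) * v q.2) := by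
    rw [Matrix.mul_apply,
      Finset.sum_eq_single p.1 (fun b _ hb => by simp [Pm, Ne.symm hb]) (by simp),
      Matrix.mul_apply,
      Finset.sum_eq_single q.1 (fun b _ hb => by simp [Qm, Ne.symm hb]) (by simp)]
    simp [Pm, Qm, Km]
  rw [h, Finset.sum_mul, Finset.mul_sum]
  exact Finset.sum_congr rfl fun j _ => by ring

/-- `Km u` kills `u` (cross product of a vector with itself). -/
lemma Km_mulVec (u : Fin 3 → ℂ) : (Km u).mulVec u = 0 := by
  funext k
  fin_cases k <;>
    simp [Km, Matrix.mulVec, dotProduct, lc, Fin.sum_univ_three, Matrix.vecHead, Matrix.vecTail] <;> ring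

lemma Km_rank_le (u : Fin 3 → ℂ) : (Km u).rank ≤ 2 := by
  by_cases hu : u = 0
  · have : Km u = 0 := by
      subst hu; funext k x; simp [Km]
    simp [this]
  · have h3 : (Km u).rank + Module.finrank ℂ (LinearMap.ker (Km u).mulVecLin) = 3 := by
      have := LinearMap.finrank_range_add_finrank_ker (Km u).mulVecLin
      simpa [Matrix.rank] using this
    have hk : u ∈ LinearMap.ker (Km u).mulVecLin := by
      simp [LinearMap.mem_ker, Matrix.mulVecLin_apply, Km_mulVec]
    have hpos : 0 < Module.finrank ℂ (LinearMap.ker (Km u).mulVecLin) := by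
      rw [Module.finrank_pos_iff_exists_ne_zero]
      exact ⟨⟨u, hk⟩, by simpa using hu⟩
    omega

lemma mat_rank_add_le {m n : Type*} [Fintype m] [Fintype n] (A B : Matrix m n ℂ) :
    (A + B).rank ≤ A.rank + B.rank := by
  rw [Matrix.rank, Matrix.rank, Matrix.rank, Matrix.mulVecLin_add]
  have hle : LinearMap.range (A.mulVecLin + B.mulVecLin)
      ≤ LinearMap.range A.mulVecLin ⊔ LinearMap.range B.mulVecLin := by
    rintro _ ⟨v, rfl⟩
    exact Submodule.mem_sup.2 ⟨_, ⟨v, rfl⟩, _, ⟨v, rfl⟩, rfl⟩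
  exact (Submodule.finrank_mono hle).trans
    (Submodule.finrank_add_le_finrank_add_finrank _ _)

lemma det_KM_eq_zero {T : Fin 3 → Fin 3 → Fin 3 → ℂ}
    (h : ∃ (u : Fin 4 → Fin 3 → ℂ) (v : Fin 4 → Fin 3 → ℂ) (w : Fin 4 → Fin 3 → ℂ),
      ∀ x y z, T x y z = ∑ i, u i x * v i y * w i z) :
    (KM T).det = 0 := by
  obtain ⟨u, v, w, hT⟩ := h
  have hKM : KM T = ∑ i : Fin 4, Pm (w i) * (Km (u i) * Qm (v i)) := by
    ext p q
    have : KM T p q = ∑ i : Fin 4, ∑ j, lc p.1 q.1 j * (u i j * v i q.2 * w i p.2) := by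
      rw [KM, Finset.sum_comm]
      exact Finset.sum_congr rfl fun j _ => by
        rw [hT, Finset.mul_sum]
    rw [this]
    rw [Matrix.sum_apply]
    exact Finset.sum_congr rfl fun i _ => KM_decomp _ _ _ _ _
  have hterm : ∀ i : Fin 4, (Pm (w i) * (Km (u i) * Qm (v i))).rank ≤ 2 := fun i =>
    (Matrix.rank_mul_le_right _ _).trans
      ((Matrix.rank_mul_le_left _ _).trans (Km_rank_le (u i)))
  have hrank : (KM T).rank ≤ 8 := by
    rw [hKM, Fin.sum_univ_four]
    calc (Pm (w 0) * (Km (u 0) * Qm (v 0)) + Pm (w 1) * (Km (u 1) * Qm (v 1))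
            + Pm (w 2) * (Km (u 2) * Qm (v 2)) + Pm (w 3) * (Km (u 3) * Qm (v 3))).rank
        ≤ (Pm (w 0) * (Km (u 0) * Qm (v 0)) + Pm (w 1) * (Km (u 1) * Qm (v 1))
            + Pm (w 2) * (Km (u 2) * Qm (v 2))).rank
            + (Pm (w 3) * (Km (u 3) * Qm (v 3))).rank := mat_rank_add_le _ _
      _ ≤ (Pm (w 0) * (Km (u 0) * Qm (v 0)) + Pm (w 1) * (Km (u 1) * Qm (v 1))).rank
            + (Pm (w 2) * (Km (u 2) * Qm (v 2))).rank
            + (Pm (w 3) * (Km (u 3) * Qm (v 3))).rank := by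
          gcongr; exact mat_rank_add_le _ _
      _ ≤ (Pm (w 0) * (Km (u 0) * Qm (v 0))).rank
            + (Pm (w 1) * (Km (u 1) * Qm (v 1))).rank
            + (Pm (w 2) * (Km (u 2) * Qm (v 2))).rank
            + (Pm (w 3) * (Km (u 3) * Qm (v 3))).rank := by
          gcongr; exact mat_rank_add_le _ _
      _ ≤ 2 + 2 + 2 + 2 := by
          gcongr <;> exact hterm _
      _ = 8 := by norm_num
  by_contra hdet
  have hunit : IsUnit (KM T) :=
    (Matrix.isUnit_iff_isUnit_det _).2 (isUnit_iff_ne_zero.2 hdet)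
  have := Matrix.rank_of_isUnit _ hunit
  rw [this] at hrank
  simp [Fintype.card_prod] at hrank

def T0 : Fin 3 → Fin 3 → Fin 3 → ℂ :=
  ![![![0,1,0],![0,0,1],![1,1,1]],
    ![![1,1,0],![0,1,1],![0,1,0]],
    ![![1,1,1],![0,0,1],![0,0,1]]]

def NL : Fin 3 → Fin 3 → Fin 3 → Fin 3 → ℂ :=
  ![![![![0,-1,0],![1,-1,-1],![1,-1,0]],
     ![![0,0,1],![-1,0,1],![-1,1,1]],
     ![![1,0,-1],![0,1,-1],![0,0,-1]]],
    ![![![1,0,0],![-1,1,0],![0,0,0]],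
     ![![0,1,1],![-2,1,2],![-1,2,0]],
     ![![0,-1,0],![1,-1,-1],![0,-1,0]]],
    ![![![0,0,0],![-1,1,0],![0,0,0]],
     ![![1,0,0],![-2,1,1],![-1,1,0]],
     ![![0,-1,0],![2,-1,-1],![1,-1,0]]]]

def Nmat : Matrix (Fin 3 × Fin 3) (Fin 3 × Fin 3) ℂ :=
  fun p q => NL p.1 p.2 q.1 q.2

set_option maxHeartbeats 2000000 in
lemma KM_T0_mul_N : KM T0 * Nmat = 1 := by
  ext p q
  fin_cases p <;> fin_cases q <;>
    norm_num [Matrix.mul_apply, Fintype.sum_prod_type, KM, lc, T0, Nmat, NL,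
      Fin.sum_univ_three, Matrix.vecHead, Matrix.vecTail, Matrix.one_apply,
      Matrix.cons_val_two, Prod.ext_iff, Fin.ext_iff]

lemma det_KM_T0_ne_zero : (KM T0).det ≠ 0 :=
  Matrix.det_ne_zero_of_right_inverse KM_T0_mul_N

lemma continuous_det_KM : Continuous fun T : Fin 3 → Fin 3 → Fin 3 → ℂ => (KM T).det := by
  apply Continuous.matrix_det
  apply continuous_matrix
  intro p q
  apply continuous_finset_sum
  intro j _
  exact continuous_const.mul
    ((continuous_apply p.2).comp ((continuous_apply q.2).comp (continuous_apply j)))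


/-- The closure of the set of tensors of rank at most 4 in `ℂ³ ⊗ ℂ³ ⊗ ℂ³` is a proper
subset: some tensor has border rank at least 5. -/
theorem sigma4_proper :
    ∃ T : Fin 3 → Fin 3 → Fin 3 → ℂ, ¬ TBorderRankLE T 4 := by
  refine ⟨T0, fun hmem => ?_⟩
  have hclosed : IsClosed {S : Fin 3 → Fin 3 → Fin 3 → ℂ | (KM S).det = 0} :=
    isClosed_eq continuous_det_KM continuous_const
  have hsub : {S : Fin 3 → Fin 3 → Fin 3 → ℂ | TRankLE S 4}
      ⊆ {S : Fin 3 → Fin 3 → Fin 3 → ℂ | (KM S).det = 0} :=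
    fun S hS => det_KM_eq_zero hS
  exact det_KM_T0_ne_zero (closure_minimal hsub hclosed hmem)

end
end

section
/- For every m ≥ 1, the rank of the m×m matrix multiplication map over ℂ satisfies R(M_{m,m,m}) ≥ 2m² − m. -/
open scoped BigOperators

/-- From a separating family of functionals one can select a subfamily of size `finrank`
that still separates points. -/
lemma exists_finset_separating {V : Type*} [AddCommGroup V] [Module ℂ V]
    [FiniteDimensional ℂ V] {r : ℕ} (φ : Fin r → Module.Dual ℂ V)
    (hsep : ∀ v : V, (∀ i, φ i v = 0) → v = 0) :
    ∃ I : Finset (Fin r), I.card = Module.finrank ℂ V ∧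
      ∀ v : V, (∀ i ∈ I, φ i v = 0) → v = 0 := by
  classical
  set W : Subspace ℂ (Module.Dual ℂ V) := Submodule.span ℂ (Set.range φ) with hW
  have hWco : W.dualCoannihilator = ⊥ := by
    rw [Submodule.eq_bot_iff]
    intro v hv
    rw [Submodule.mem_dualCoannihilator] at hv
    exact hsep v fun i => hv (φ i) (Submodule.subset_span ⟨i, rfl⟩)
  have hWtop : W = ⊤ := by
    apply Submodule.eq_top_of_finrank_eq
    have h1 := Subspace.finrank_add_finrank_dualCoannihilator_eq W
    rw [hWco, finrank_bot, add_zero] at h1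
    rw [h1, Subspace.dual_finrank_eq]
  obtain ⟨b, hbsub, hbspan, hbli⟩ := exists_linearIndependent ℂ (Set.range φ)
  have hbfin : b.Finite := hbli.setFinite
  haveI := hbfin.fintype
  have hbspan' : Submodule.span ℂ b = ⊤ := by rw [hbspan, ← hW, hWtop]
  let B : Module.Basis b ℂ (Module.Dual ℂ V) :=
    Module.Basis.mk hbli (by rw [Subtype.range_coe]; exact hbspan'.ge)
  have hcard : Fintype.card b = Module.finrank ℂ V := by
    rw [← Module.finrank_eq_card_basis B, Subspace.dual_finrank_eq]
  have hchoice : ∀ x : b, ∃ i : Fin r, φ i = (x : Module.Dual ℂ V) := fun x => hbsub x.2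
  choose σ hσ using hchoice
  have hσinj : Function.Injective σ := by
    intro x y hxy
    apply Subtype.ext
    rw [← hσ x, ← hσ y, hxy]
  refine ⟨Finset.image σ Finset.univ, ?_, ?_⟩
  · rw [Finset.card_image_of_injective _ hσinj, Finset.card_univ, hcard]
  · intro v hv
    rw [← Module.forall_dual_apply_eq_zero_iff ℂ v]
    intro ψ
    have hψ : ψ ∈ Submodule.span ℂ b := by rw [hbspan']; exact Submodule.mem_top
    induction hψ using Submodule.span_induction with
    | mem x hx =>
      have hmem : σ ⟨x, hx⟩ ∈ Finset.image σ Finset.univ :=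
        Finset.mem_image_of_mem σ (Finset.mem_univ _)
      have := hv _ hmem
      rwa [hσ ⟨x, hx⟩] at this
    | zero => simp
    | add ψ₁ ψ₂ _ _ h₁ h₂ => simp [h₁, h₂]
    | smul a ψ₁ _ h₁ => simp [h₁]

/-- The rank of `m×m` matrix multiplication over ℂ is at least `2m² − m`. -/
theorem rank_matMul_lower_bound (m : ℕ) (hm : 1 ≤ m) (r : ℕ)
    (h : HasRankLE (fun (X Y : Matrix (Fin m) (Fin m) ℂ) => X * Y) r) :
    2 * m ^ 2 ≤ r + m := by
  classical
  obtain ⟨α, β, c, hf⟩ := h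
  simp only at hf
  set A := Matrix (Fin m) (Fin m) ℂ
  have hA : Module.finrank ℂ A = m * m := by
    simp [A, Module.finrank_matrix]
  set z : Fin m := ⟨0, hm⟩ with hz
  -- the "first row" linear map; its kernel is a maximal right ideal
  let row : A →ₗ[ℂ] (Fin m → ℂ) :=
    { toFun := fun X => X z
      map_add' := fun X Y => rfl
      map_smul' := fun a X => rfl }
  set R : Submodule ℂ A := LinearMap.ker row with hRdef
  have hrow_surj : Function.Surjective row := by
    intro w
    refine ⟨Matrix.of fun i j => if i = z then w j else 0, ?_⟩
    funext j
    show (if z = z then w j else 0) = w j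
    simp
  have hR : m + Module.finrank ℂ ↥R = m * m := by
    have h1 := row.finrank_range_add_finrank_ker
    rw [LinearMap.range_eq_top.mpr hrow_surj, finrank_top, hA] at h1
    rw [← h1]
    simp [Module.finrank_fin_fun]
    rfl
  -- nondegeneracy of the α family on R
  have hsep : ∀ v : ↥R, (∀ i, ((α i).comp R.subtype) v = 0) → v = 0 := by
    intro v hv
    have h1 : (v : A) * 1 = 0 := by
      rw [hf]
      apply Finset.sum_eq_zero
      intro i _
      have : α i (v : A) = 0 := hv i
      rw [this, zero_mul, zero_smul]
    rw [mul_one] at h1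
    exact Subtype.ext h1
  obtain ⟨I, hIcard, hI⟩ := exists_finset_separating (fun i => (α i).comp R.subtype) hsep
  -- the complement U
  let P : A →ₗ[ℂ] ({i : Fin r // i ∈ I} → ℂ) := LinearMap.pi fun i => α i.1
  set U : Submodule ℂ A := LinearMap.ker P with hUdef
  have hUrank : m ≤ Module.finrank ℂ ↥U := by
    have h1 := P.finrank_range_add_finrank_ker
    rw [hA] at h1
    have h2 : Module.finrank ℂ ↥(LinearMap.range P) ≤ I.card := by
      have := Submodule.finrank_le (LinearMap.range P)
      rwa [Module.finrank_pi, Fintype.card_coe] at this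
    have h3 : I.card + m = m * m := by rw [hIcard]; omega
    linarith
  have hinf : U ⊓ R = ⊥ := by
    rw [Submodule.eq_bot_iff]
    rintro x ⟨hxU, hxR⟩
    have hx0 : (⟨x, hxR⟩ : ↥R) = 0 := by
      apply hI
      intro i hi
      show α i x = 0
      exact congrFun (LinearMap.mem_ker.mp hxU) ⟨i, hi⟩
    exact Subtype.ext_iff.mp hx0
  have hsup : U ⊔ R = ⊤ := by
    apply Submodule.eq_top_of_finrank_eq
    have h3 := Submodule.finrank_sup_add_finrank_inf_eq U R
    rw [hinf, finrank_bot, add_zero] at h3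
    have h4 : Module.finrank ℂ ↥(U ⊔ R) ≤ Module.finrank ℂ A := Submodule.finrank_le _
    rw [hA] at h4 ⊢
    linarith
  -- the β family restricted to indices outside I is injective on the Y side
  let Q : A →ₗ[ℂ] ({i : Fin r // i ∉ I} → ℂ) := LinearMap.pi fun i => β i.1
  have hQinj : Function.Injective Q := by
    rw [← LinearMap.ker_eq_bot]
    rw [Submodule.eq_bot_iff]
    intro Y hY
    have hbz : ∀ i, i ∉ I → β i Y = 0 := fun i hi =>
      congrFun (LinearMap.mem_ker.mp hY) ⟨i, hi⟩
    have hUY : ∀ X, X ∈ U → X * Y = 0 := by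
      intro X hX
      rw [hf X Y]
      apply Finset.sum_eq_zero
      intro i _
      by_cases hi : i ∈ I
      · have : α i X = 0 := congrFun (LinearMap.mem_ker.mp hX) ⟨i, hi⟩
        rw [this, zero_mul, zero_smul]
      · rw [hbz i hi, mul_zero, zero_smul]
    have hRY : ∀ Z, Z ∈ R → Z * Y ∈ R := by
      intro Z hZ
      rw [hRdef, LinearMap.mem_ker] at hZ ⊢
      have hz0 : ∀ k, Z z k = 0 := fun k => congrFun hZ k
      funext j
      show (Z * Y) z j = 0
      rw [Matrix.mul_apply]
      exact Finset.sum_eq_zero fun k _ => by rw [hz0 k, zero_mul]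
    have key : ∀ k j, Y k j = 0 := by
      intro k j
      have hmem : Matrix.single z k (1 : ℂ) ∈ U ⊔ R := by
        rw [hsup]; exact Submodule.mem_top
      obtain ⟨X, hX, Z, hZ, hXZ⟩ := Submodule.mem_sup.mp hmem
      have h5 : Matrix.single z k (1 : ℂ) * Y = Z * Y := by
        rw [← hXZ, add_mul, hUY X hX, zero_add]
      have h6 : (Matrix.single z k (1 : ℂ) * Y) z j = 0 := by
        rw [h5]
        have hzy := hRY Z hZ
        rw [hRdef, LinearMap.mem_ker] at hzy
        exact congrFun hzy j
      rwa [Matrix.single_mul_apply_same, one_mul] at h6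
    exact Matrix.ext fun k j => (key k j).trans rfl
  have hfin : Module.finrank ℂ A ≤ Module.finrank ℂ ({i : Fin r // i ∉ I} → ℂ) :=
    LinearMap.finrank_le_finrank_of_injective hQinj
  rw [hA, Module.finrank_pi] at hfin
  have hcompl : Fintype.card {i : Fin r // i ∉ I} + I.card = r := by
    have h1 := Fintype.card_subtype_compl (fun i : Fin r => i ∈ I)
    have h2 : Fintype.card {i : Fin r // i ∈ I} = I.card := Fintype.card_coe I
    have h3 : I.card ≤ r := by
      have := Finset.card_le_univ I
      rwa [Fintype.card_fin] at this
    rw [Fintype.card_fin] at h1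
    omega
  have h3 : I.card + m = m * m := by rw [hIcard]; omega
  rw [pow_two]
  linarith
end

section
/- For any bilinear map f : A × B → C between finite-dimensional complex vector spaces, the multiplicative complexity MC(f) and the rank R(f) satisfy MC(f) ≤ R(f) ≤ 2·MC(f). -/
open scoped BigOperators

/-- The rank of a bilinear map: the least length of a bilinear computation. -/
noncomputable def bilinRank {A B C : Type*} [AddCommGroup A] [Module ℂ A] [AddCommGroup B]
    [Module ℂ B] [AddCommGroup C] [Module ℂ C] (f : A → B → C) : ℕ :=
  sInf {r | HasRankLE f r}

/-- A bilinear map `f : A × B → C` has multiplicative complexity at most `r` if there are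
linear functionals `λᵢ, μᵢ` on `A ⊕ B` and vectors `cᵢ ∈ C` with
`f a b = ∑ᵢ λᵢ(a,b) μᵢ(a,b) cᵢ`. -/
def HasMCLE {A B C : Type*} [AddCommGroup A] [Module ℂ A] [AddCommGroup B] [Module ℂ B]
    [AddCommGroup C] [Module ℂ C] (f : A → B → C) (r : ℕ) : Prop :=
  ∃ (lam mu : Fin r → (A × B →ₗ[ℂ] ℂ)) (c : Fin r → C),
    ∀ a b, f a b = ∑ i, (lam i (a, b) * mu i (a, b)) • c i

/-- The multiplicative complexity of a bilinear map. -/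
noncomputable def mulComplexity {A B C : Type*} [AddCommGroup A] [Module ℂ A] [AddCommGroup B]
    [Module ℂ B] [AddCommGroup C] [Module ℂ C] (f : A → B → C) : ℕ :=
  sInf {r | HasMCLE f r}

lemma hasMCLE_of_hasRankLE {A B C : Type*} [AddCommGroup A] [Module ℂ A] [AddCommGroup B]
    [Module ℂ B] [AddCommGroup C] [Module ℂ C] {f : A → B → C} {r : ℕ}
    (h : HasRankLE f r) : HasMCLE f r := by
  obtain ⟨α, β, c, h⟩ := h
  exact ⟨fun i => (α i).comp (LinearMap.fst ℂ A B),
    fun i => (β i).comp (LinearMap.snd ℂ A B), c, fun a b => by simpa using h a b⟩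

lemma exists_hasRankLE {A B C : Type*}
    [AddCommGroup A] [Module ℂ A] [FiniteDimensional ℂ A]
    [AddCommGroup B] [Module ℂ B] [FiniteDimensional ℂ B]
    [AddCommGroup C] [Module ℂ C]
    (f : A →ₗ[ℂ] B →ₗ[ℂ] C) : ∃ r, HasRankLE (fun a b => f a b) r := by
  classical
  set n := Module.finrank ℂ A with hn
  set m := Module.finrank ℂ B with hm
  let bA := Module.finBasis ℂ A
  let bB := Module.finBasis ℂ B
  let e : Fin n × Fin m ≃ Fin (n * m) := finProdFinEquiv
  refine ⟨n * m, fun k => bA.coord (e.symm k).1,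
    fun k => bB.coord (e.symm k).2,
    fun k => f (bA (e.symm k).1) (bB (e.symm k).2), ?_⟩
  intro a b
  rw [← Equiv.sum_comp e
    (fun k => (bA.coord (e.symm k).1 a * bB.coord (e.symm k).2 b) •
      f (bA (e.symm k).1) (bB (e.symm k).2))]
  simp only [Equiv.symm_apply_apply]
  rw [Fintype.sum_prod_type]
  conv_lhs => rw [← bA.sum_repr a, ← bB.sum_repr b]
  simp only [map_sum, map_smul, LinearMap.sum_apply, LinearMap.smul_apply]
  simp only [Finset.smul_sum]
  rw [Finset.sum_comm]
  refine Finset.sum_congr rfl fun i _ => ?_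
  refine Finset.sum_congr rfl fun j _ => ?_
  rw [Module.Basis.coord_apply, Module.Basis.coord_apply, mul_smul, smul_comm]

lemma hasRankLE_of_hasMCLE {A B C : Type*}
    [AddCommGroup A] [Module ℂ A] [AddCommGroup B] [Module ℂ B]
    [AddCommGroup C] [Module ℂ C]
    (f : A →ₗ[ℂ] B →ₗ[ℂ] C) {r : ℕ} (h : HasMCLE (fun a b => f a b) r) :
    HasRankLE (fun a b => f a b) (2 * r) := by
  classical
  obtain ⟨lam, mu, c, h⟩ := h
  set La : Fin r → (A →ₗ[ℂ] ℂ) := fun i => (lam i).comp (LinearMap.inl ℂ A B)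
  set Lb : Fin r → (B →ₗ[ℂ] ℂ) := fun i => (lam i).comp (LinearMap.inr ℂ A B)
  set Ma : Fin r → (A →ₗ[ℂ] ℂ) := fun i => (mu i).comp (LinearMap.inl ℂ A B)
  set Mb : Fin r → (B →ₗ[ℂ] ℂ) := fun i => (mu i).comp (LinearMap.inr ℂ A B)
  have hlam : ∀ i a b, lam i (a, b) = La i a + Lb i b := by
    intro i a b
    have : (a, b) = (a, (0:B)) + ((0:A), b) := by simp
    rw [this, map_add]; rfl
  have hmu : ∀ i a b, mu i (a, b) = Ma i a + Mb i b := by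
    intro i a b
    have : (a, b) = (a, (0:B)) + ((0:A), b) := by simp
    rw [this, map_add]; rfl
  have hA0 : ∀ a, (0:C) = ∑ i, (La i a * Ma i a) • c i := by
    intro a
    have := h a 0
    simpa [hlam, hmu] using this
  have h0B : ∀ b, (0:C) = ∑ i, (Lb i b * Mb i b) • c i := by
    intro b
    have := h 0 b
    simpa [hlam, hmu] using this
  have key : ∀ a b, f a b = (∑ i, (La i a * Mb i b) • c i) + ∑ i, (Ma i a * Lb i b) • c i := by
    intro a b
    have hf := h a b
    simp only [hlam, hmu] at hf
    have expand : ∀ i : Fin r, ((La i a + Lb i b) * (Ma i a + Mb i b)) • c i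
        = (La i a * Ma i a) • c i + ((La i a * Mb i b) • c i +
          ((Ma i a * Lb i b) • c i + (Lb i b * Mb i b) • c i)) := by
      intro i
      rw [← add_smul, ← add_smul, ← add_smul]
      congr 1
      ring
    rw [hf]
    simp only [expand, Finset.sum_add_distrib]
    rw [← hA0 a, ← h0B b]
    abel
  rw [two_mul]
  refine ⟨fun k => Sum.elim La Ma (finSumFinEquiv.symm k),
    fun k => Sum.elim Mb Lb (finSumFinEquiv.symm k),
    fun k => Sum.elim c c (finSumFinEquiv.symm k), fun a b => ?_⟩
  dsimp only
  rw [key a b, Equiv.sum_comp finSumFinEquiv.symm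
    (fun s => (Sum.elim La Ma s a * Sum.elim Mb Lb s b) • Sum.elim c c s),
    Fintype.sum_sum_type]
  simp

/-- For any bilinear map between finite-dimensional complex vector spaces,
`MC(f) ≤ R(f) ≤ 2·MC(f)`. -/
theorem mulComplexity_le_rank_le_two_mul {A B C : Type*}
    [AddCommGroup A] [Module ℂ A] [FiniteDimensional ℂ A]
    [AddCommGroup B] [Module ℂ B] [FiniteDimensional ℂ B]
    [AddCommGroup C] [Module ℂ C] [FiniteDimensional ℂ C]
    (f : A →ₗ[ℂ] B →ₗ[ℂ] C) :
    mulComplexity (fun a b => f a b) ≤ bilinRank (fun a b => f a b) ∧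
    bilinRank (fun a b => f a b) ≤ 2 * mulComplexity (fun a b => f a b) := by
  have hexR : ∃ r, HasRankLE (fun a b => f a b) r := exists_hasRankLE f
  have hR : HasRankLE (fun a b => f a b) (bilinRank (fun a b => f a b)) :=
    Nat.sInf_mem hexR
  have hexM : ∃ r, HasMCLE (fun a b => f a b) r :=
    ⟨_, hasMCLE_of_hasRankLE hR⟩
  have hM : HasMCLE (fun a b => f a b) (mulComplexity (fun a b => f a b)) :=
    Nat.sInf_mem hexM
  exact ⟨Nat.sInf_le (hasMCLE_of_hasRankLE hR),
    Nat.sInf_le (hasRankLE_of_hasMCLE f hM)⟩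
end

section
/- (Waksman) The multiplicative complexity of the 2×2 by 2×3 matrix multiplication map over ℂ is at most 10: there exist linear functionals λ_1,…,λ_{10} and μ_1,…,μ_{10} on Matrix(2×2,ℂ) ⊕ Matrix(2×3,ℂ) and matrices c_1,…,c_{10} ∈ Matrix(2×3,ℂ) such that A·B = Σ_{i=1}^{10} λ_i(A,B) μ_i(A,B) c_i for all A ∈ Matrix(2×2,ℂ), B ∈ Matrix(2×3,ℂ). -/
open scoped BigOperators

/-- The pair space for 2×2 and 2×3 complex matrices. -/
abbrev WPair := Matrix (Fin 2) (Fin 2) ℂ × Matrix (Fin 2) (Fin 3) ℂ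

/-- Coordinate functional on the first (2×2) component. -/
def eA (i j : Fin 2) : WPair →ₗ[ℂ] ℂ where
  toFun p := p.1 i j
  map_add' _ _ := rfl
  map_smul' _ _ := rfl

/-- Coordinate functional on the second (2×3) component. -/
def eB (i : Fin 2) (j : Fin 3) : WPair →ₗ[ℂ] ℂ where
  toFun p := p.2 i j
  map_add' _ _ := rfl
  map_smul' _ _ := rfl

/-- Waksman: the multiplicative complexity of 2×2 by 2×3 matrix multiplication over ℂ
is at most 10. -/
theorem waksman_mulComplexity_le_ten :
    HasMCLE (fun (A : Matrix (Fin 2) (Fin 2) ℂ) (B : Matrix (Fin 2) (Fin 3) ℂ) => A * B) 10 := by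
  refine ⟨![eA 0 0 + eB 1 0, eA 0 0 - eB 1 0, eA 1 0 + eB 1 0, eA 1 0 - eB 1 0,
            eA 0 0 + eB 1 1, eA 0 0 - eB 1 1, eA 1 0 + eB 1 1,
            eA 0 0 + eB 1 2, eA 0 0 - eB 1 2, eA 1 0 + eB 1 2],
          ![eA 0 1 + eB 0 0, eA 0 1 - eB 0 0, eA 1 1 + eB 0 0, eA 1 1 - eB 0 0,
            eA 0 1 + eB 0 1, eA 0 1 - eB 0 1, eA 1 1 + eB 0 1,
            eA 0 1 + eB 0 2, eA 0 1 - eB 0 2, eA 1 1 + eB 0 2],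
          ![!![(1:ℂ)/2,0,0; 0,1/2,1/2],
            !![-(1:ℂ)/2,0,0; 0,1/2,1/2],
            !![(0:ℂ),0,0; 1/2,-1/2,-1/2],
            !![(0:ℂ),0,0; -1/2,-1/2,-1/2],
            !![(0:ℂ),1/2,0; 0,-1/2,0],
            !![(0:ℂ),-1/2,0; 0,-1/2,0],
            !![(0:ℂ),0,0; 0,1,0],
            !![(0:ℂ),0,1/2; 0,0,-1/2],
            !![(0:ℂ),0,-1/2; 0,0,-1/2],
            !![(0:ℂ),0,0; 0,0,1]], ?_⟩
  intro A B
  ext i k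
  simp only [Fin.sum_univ_succ, Fin.sum_univ_zero, Matrix.add_apply, Matrix.sum_apply,
    Matrix.smul_apply, Matrix.mul_apply, Fin.isValue, Matrix.cons_val_zero, Matrix.cons_val_one,
    Matrix.head_cons, LinearMap.add_apply, LinearMap.sub_apply, eA, eB, LinearMap.coe_mk,
    AddHom.coe_mk, add_zero, smul_eq_mul, Matrix.cons_val', Matrix.cons_val_fin_one,
    Matrix.empty_val', Matrix.head_fin_const, Matrix.of_apply, Matrix.cons_val_succ]
  fin_cases i <;> fin_cases k <;> simp <;> ring!
end

section
/- Let V be a finite-dimensional complex vector space, let d ≥ 1, and let S ⊆ V be a subset that is closed under scalar multiplication and whose linear span is all of V. If P : V → ℂ is a homogeneous polynomial function of degree d (equivalently, P is given by a homogeneous multivariate polynomial of degree d in the coordinates with respect to some basis of V) that vanishes on every sum x_1 + ⋯ + x_d with x_1,…,x_d ∈ S, then P = 0. (This is the statement that I_d(σ_d(X)) = 0 for a variety X ⊂ ℙV* not contained in a linear subspace.) -/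
open scoped BigOperators

open MvPolynomial in
-- coefficient of restriction
lemma coeff_aeval_ite {m : ℕ} (T : Finset (Fin m)) (q : MvPolynomial (Fin m) ℂ)
    (σ : Fin m →₀ ℕ) (hσ : σ.support ⊆ T) :
    MvPolynomial.coeff σ
      (MvPolynomial.aeval (fun i => if i ∈ T then (MvPolynomial.X i : MvPolynomial (Fin m) ℂ) else 0) q)
      = MvPolynomial.coeff σ q := by
  have key : ∀ (τ : Fin m →₀ ℕ) (c : ℂ),
      MvPolynomial.aeval (fun i => if i ∈ T then (MvPolynomial.X i : MvPolynomial (Fin m) ℂ) else 0)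
        (MvPolynomial.monomial τ c)
      = if τ.support ⊆ T then MvPolynomial.monomial τ c else 0 := by
    intro τ c
    rw [aeval_monomial]
    by_cases h : τ.support ⊆ T
    · rw [if_pos h, monomial_eq]
      congr 1
      refine Finsupp.prod_congr fun i hi => ?_
      rw [if_pos (h hi)]
    · rw [if_neg h]
      obtain ⟨i, hi, hiT⟩ : ∃ i ∈ τ.support, i ∉ T := by
        simpa [Finset.subset_iff] using h
      rw [Finsupp.prod]
      rw [Finset.prod_eq_zero hi]
      · ring
      · rw [if_neg hiT, zero_pow (by simpa using hi)]
  conv_lhs => rw [q.as_sum, map_sum]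
  rw [MvPolynomial.coeff_sum]
  rw [Finset.sum_eq_single σ]
  · rw [key, if_pos hσ, coeff_monomial, if_pos rfl]
  · intro τ hτ hne
    rw [key]
    split
    · rw [coeff_monomial, if_neg hne]
    · exact coeff_zero σ
  · intro h
    rw [MvPolynomial.notMem_support_iff] at h
    rw [h, key]
    simp

open MvPolynomial in
lemma eq_zero_of_vanish_small {m d : ℕ} (q : MvPolynomial (Fin m) ℂ)
    (hq : q.IsHomogeneous d)
    (hvan : ∀ x : Fin m → ℂ,
      (Finset.univ.filter fun i => x i ≠ 0).card ≤ d → MvPolynomial.eval x q = 0) :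
    q = 0 := by
  ext σ
  rw [coeff_zero]
  by_cases hσ : σ ∈ q.support
  · set T := σ.support with hT
    have hcard : T.card ≤ d := by
      have hdeg : σ.degree = d := by rw [Finsupp.degree_eq_weight_one]; exact hq (MvPolynomial.mem_support_iff.mp hσ)
      calc T.card = ∑ i ∈ T, 1 := by simp
        _ ≤ ∑ i ∈ T, σ i := Finset.sum_le_sum fun i hi => by
            simpa [Nat.one_le_iff_ne_zero] using Finsupp.mem_support_iff.mp hi
        _ = σ.degree := rfl
        _ = d := hdeg
    have hres : MvPolynomial.aeval
        (fun i => if i ∈ T then (MvPolynomial.X i : MvPolynomial (Fin m) ℂ) else 0) q = 0 := by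
      apply MvPolynomial.funext
      intro x
      rw [map_zero]
      rw [MvPolynomial.aeval_def, MvPolynomial.algebraMap_eq, ← MvPolynomial.eval_assoc]
      have : (MvPolynomial.eval x ∘ fun i =>
          if i ∈ T then (MvPolynomial.X i : MvPolynomial (Fin m) ℂ) else 0)
          = fun i => if i ∈ T then x i else 0 := by
        funext i; by_cases h : i ∈ T <;> simp [h]
      rw [this]
      apply hvan
      refine le_trans (Finset.card_le_card ?_) hcard
      intro i hi
      simp only [Finset.mem_filter, Finset.mem_univ, true_and] at hi
      by_contra h
      exact hi (by simp [h])
    have := coeff_aeval_ite T q σ (le_refl _)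
    rw [hres] at this
    rw [← this, coeff_zero]
  · exact MvPolynomial.notMem_support_iff.mp hσ

/-- If `S ⊆ V` is closed under scalar multiplication and spans the finite-dimensional
complex vector space `V` (with basis `b`), and a homogeneous degree-`d` polynomial
function `P` (given by a homogeneous `MvPolynomial` in the coordinates with respect to
`b`) vanishes on every sum of `d` elements of `S`, then `P` is identically zero.
This is the statement that `I_d(σ_d(X)) = 0` for a variety `X` not contained in a
hyperplane. -/
theorem homogeneous_vanishing_on_secant_sums {V : Type*} [AddCommGroup V] [Module ℂ V]
    {n : ℕ} (b : Module.Basis (Fin n) ℂ V) (d : ℕ) (hd : 1 ≤ d)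
    (S : Set V) (hS : ∀ (lam : ℂ), ∀ x ∈ S, lam • x ∈ S)
    (hspan : Submodule.span ℂ S = ⊤)
    (p : MvPolynomial (Fin n) ℂ) (hp : p.IsHomogeneous d)
    (hvanish : ∀ x : Fin d → V, (∀ i, x i ∈ S) →
      MvPolynomial.eval (fun j => b.repr (∑ i, x i) j) p = 0) :
    ∀ v : V, MvPolynomial.eval (fun j => b.repr v j) p = 0 := by
  rcases S.eq_empty_or_nonempty with hE | ⟨s₀, hs₀⟩
  · -- S empty : V is trivial
    intro v
    have hv : v = 0 := by
      have : v ∈ Submodule.span ℂ S := hspan ▸ Submodule.mem_top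
      rw [hE, Submodule.span_empty, Submodule.mem_bot] at this
      exact this
    subst hv
    have : (fun j => (b.repr (0 : V)) j) = (0 : Fin n → ℂ) := by
      funext j; simp
    rw [this]
    have h0 : MvPolynomial.constantCoeff p = 0 := by
      have := hp.coeff_eq_zero (d := 0) (by simp; omega)
      simpa [MvPolynomial.constantCoeff_eq] using this
    calc MvPolynomial.eval (0 : Fin n → ℂ) p
        = MvPolynomial.constantCoeff p := by
          rw [MvPolynomial.eval_zero]
      _ = 0 := h0
  · have h0S : (0 : V) ∈ S := by simpa using hS 0 s₀ hs₀
    intro v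
    obtain ⟨m, c, g, hsum⟩ := Submodule.mem_span_set'.mp
      (show v ∈ Submodule.span ℂ S from hspan ▸ Submodule.mem_top)
    set q : MvPolynomial (Fin m) ℂ :=
      MvPolynomial.aeval
        (fun j => ∑ i, MvPolynomial.C ((b.repr (g i : V)) j) * MvPolynomial.X i) p with hq
    have evalq : ∀ x : Fin m → ℂ,
        MvPolynomial.eval x q
          = MvPolynomial.eval (fun j => ∑ i, (b.repr (g i : V)) j * x i) p := by
      intro x
      rw [hq, MvPolynomial.aeval_def, MvPolynomial.algebraMap_eq, ← MvPolynomial.eval_assoc]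
      have hfg : (⇑(MvPolynomial.eval x) ∘ fun j => ∑ i, MvPolynomial.C ((b.repr (g i : V)) j) * MvPolynomial.X i)
          = fun j => ∑ i, (b.repr (g i : V)) j * x i := by
        funext j
        simp [map_sum]
      rw [hfg]
    have hqhom : q.IsHomogeneous d := by
      have := hp.aeval
        (fun j => ∑ i, MvPolynomial.C ((b.repr (g i : V)) j) * MvPolynomial.X i)
        (fun j => MvPolynomial.IsHomogeneous.sum _ _ _
          (fun i _ => MvPolynomial.isHomogeneous_C_mul_X _ _))
      simpa [hq] using this
    have hrepr : ∀ (y : Fin m → ℂ) (j : Fin n),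
        (b.repr (∑ i, y i • (g i : V))) j = ∑ i, (b.repr (g i : V)) j * y i := by
      intro y j
      rw [map_sum, Finsupp.finset_sum_apply]
      refine Finset.sum_congr rfl fun i _ => ?_
      rw [map_smul, Finsupp.smul_apply, smul_eq_mul, mul_comm]
    have hq0 : q = 0 := by
      apply eq_zero_of_vanish_small q hqhom
      intro x hx
      set T : Finset (Fin m) := Finset.univ.filter fun i => x i ≠ 0 with hT
      let e := T.orderIsoOfFin rfl
      let f : ℕ → V := fun k => if h : k < T.card then x (e ⟨k, h⟩) • ((g (e ⟨k, h⟩) : V)) else 0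
      have hfS : ∀ k : Fin d, f k ∈ S := by
        intro k
        by_cases h : (k : ℕ) < T.card
        · simpa only [f, dif_pos h] using hS _ _ (g (e ⟨k, h⟩)).2
        · simpa only [f, dif_neg h] using h0S
      have hsum2 : ∑ k : Fin d, f k = ∑ i, x i • (g i : V) := by
        rw [Fin.sum_univ_eq_sum_range]
        rw [← Finset.sum_subset (Finset.range_subset_range.mpr hx)
          (fun k _ hk => by simp only [f, Finset.mem_range, not_lt] at hk ⊢; rw [dif_neg (by omega)])]
        rw [← Fin.sum_univ_eq_sum_range]
        have : ∀ k : Fin T.card, f k = x (e k) • (g (e k) : V) := by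
          intro k
          simp only [f, dif_pos k.isLt]
        rw [Finset.sum_congr rfl (fun k _ => this k)]
        rw [Fintype.sum_equiv e.toEquiv (fun k => x (e k) • ((g (e k) : V)))
          (fun t : T => x t • ((g t : V))) (fun k => rfl)]
        rw [Finset.sum_coe_sort T (fun i => x i • (g i : V))]
        refine Finset.sum_subset (Finset.subset_univ T) fun i _ hi => ?_
        have : x i = 0 := by simpa [hT] using hi
        rw [this, zero_smul]
      rw [evalq]
      have := hvanish (fun k => f k) hfS
      rw [hsum2] at this
      rw [← this]
      have hfg2 : (fun j => ∑ i, (b.repr (g i : V)) j * x i)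
          = fun j => (b.repr (∑ i, x i • (g i : V))) j := by
        funext j
        rw [hrepr]
      rw [hfg2]
    have : MvPolynomial.eval c q = 0 := by rw [hq0, map_zero]
    rw [evalq] at this
    rw [← this]
    have hfg3 : (fun j => (b.repr v) j) = fun j => ∑ i, (b.repr (g i : V)) j * c i := by
      funext j
      rw [← hrepr c j, hsum]
    rw [hfg3]
end
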